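/- Decomposition of FB entropy: defining the discord part E^D_FB(m) = −Σ_θ BetP(θ) log BetP(θ) (Shannon entropy of the pignistic transform) and the non-specificity part E^N_FB(m) = E_FB(m) − E^D_FB(m), the non-specificity part is nonnegative for every BPA m, i.e., E_FB(m) ≥ H(BetP_m). -/

import Mathlib

open Finset Real Filter

/-- A basic probability assignment on the power set of a finite frame `Θ`. -/
noncomputable def IsBPA {Θ : Type*} [Fintype Θ] [DecidableEq Θ] (m : Finset Θ → ℝ) : Prop :=
  m ∅ = 0 ∧ (∀ F, 0 ≤ m F) ∧ ∑ F : Finset Θ, m F = 1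

/-- The fractal-based basic probability assignment:
`m_F(F) = m(F)/(2^|F|-1) + Σ_{F ⊊ G} m(G)/(2^|G|-1)`. -/
noncomputable def mF {Θ : Type*} [Fintype Θ] [DecidableEq Θ] (m : Finset Θ → ℝ) (F : Finset Θ) : ℝ :=
  m F / ((2 : ℝ) ^ F.card - 1) +
    ∑ G ∈ Finset.univ.filter (fun G : Finset Θ => F ⊂ G), m G / ((2 : ℝ) ^ G.card - 1)

/-- Fractal-based belief entropy: Shannon entropy of `m_F` over nonempty subsets. -/
noncomputable def EFB {Θ : Type*} [Fintype Θ] [DecidableEq Θ] (m : Finset Θ → ℝ) : ℝ :=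
  ∑ F ∈ Finset.univ.filter (fun F : Finset Θ => F.Nonempty), Real.negMulLog (mF m F)

/-- Pignistic probability transformation: `BetP(θ) = Σ_{θ ∈ F} m(F)/|F|`. -/
noncomputable def BetP {Θ : Type*} [Fintype Θ] [DecidableEq Θ] (m : Finset Θ → ℝ) (θ : Θ) : ℝ :=
  ∑ F ∈ Finset.univ.filter (fun F : Finset Θ => θ ∈ F), m F / (F.card : ℝ)

/-- Plausibility of a singleton: `Pl(θ) = Σ_{θ ∈ F} m(F)`. -/
noncomputable def Pl {Θ : Type*} [Fintype Θ] [DecidableEq Θ] (m : Finset Θ → ℝ) (θ : Θ) : ℝ :=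
  ∑ F ∈ Finset.univ.filter (fun F : Finset Θ => θ ∈ F), m F


section Helpers
variable {Θ : Type*} [Fintype Θ] [DecidableEq Θ]

lemma mF_eq (m : Finset Θ → ℝ) (F : Finset Θ) :
    mF m F = ∑ G ∈ Finset.univ.filter (fun G : Finset Θ => F ⊆ G),
      m G / ((2 : ℝ) ^ G.card - 1) := by
  have h : Finset.univ.filter (fun G : Finset Θ => F ⊆ G)
      = insert F (Finset.univ.filter (fun G : Finset Θ => F ⊂ G)) := by
    ext G
    simp only [mem_filter, mem_univ, true_and, mem_insert]
    constructor
    · intro h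
      rcases eq_or_ne G F with h' | h'
      · exact Or.inl h'
      · exact Or.inr (ssubset_of_subset_of_ne h (Ne.symm h'))
    · rintro (rfl | h)
      · exact subset_rfl
      · exact h.subset
  rw [h, Finset.sum_insert (by simp [ssubset_irrefl])]
  rfl


-- combinatorial identity

lemma sum_inv_card_subsets (G : Finset Θ) {θ : Θ} (hθ : θ ∈ G) :
    ∑ F ∈ Finset.univ.filter (fun F : Finset Θ => θ ∈ F ∧ F ⊆ G), ((F.card : ℝ))⁻¹
      = ((2 : ℝ) ^ G.card - 1) / G.card := by
  classical
  set n := (G.erase θ).card with hn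
  have hpos : 0 < G.card := Finset.card_pos.mpr ⟨θ, hθ⟩
  have hGcard : G.card = n + 1 := by
    rw [hn, Finset.card_erase_of_mem hθ]; omega
  have h1 : ∑ F ∈ Finset.univ.filter (fun F : Finset Θ => θ ∈ F ∧ F ⊆ G), ((F.card : ℝ))⁻¹
      = ∑ S ∈ (G.erase θ).powerset, (((S.card + 1 : ℕ) : ℝ))⁻¹ := by
    refine Finset.sum_nbij' (fun F => F.erase θ) (fun S => insert θ S) ?_ ?_ ?_ ?_ ?_
    · intro F hF
      simp only [mem_filter, mem_univ, true_and] at hF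
      exact Finset.mem_powerset.mpr (Finset.erase_subset_erase θ hF.2)
    · intro S hS
      simp only [Finset.mem_powerset] at hS
      simp only [mem_filter, mem_univ, true_and]
      refine ⟨Finset.mem_insert_self θ S, Finset.insert_subset hθ (hS.trans (Finset.erase_subset θ G))⟩
    · intro F hF
      simp only [mem_filter, mem_univ, true_and] at hF
      exact Finset.insert_erase hF.1
    · intro S hS
      simp only [Finset.mem_powerset] at hS
      exact Finset.erase_insert (fun h => (Finset.notMem_erase θ G) (hS h))
    · intro F hF
      simp only [mem_filter, mem_univ, true_and] at hF
      have hc : F.card = (F.erase θ).card + 1 := by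
        rw [Finset.card_erase_of_mem hF.1]
        have : 0 < F.card := Finset.card_pos.mpr ⟨θ, hF.1⟩
        omega
      rw [hc]
  have h2 : ∑ S ∈ (G.erase θ).powerset, (((S.card + 1 : ℕ) : ℝ))⁻¹
      = ∑ k ∈ Finset.range (n + 1), (n.choose k) • (((k + 1 : ℕ) : ℝ))⁻¹ :=
    Finset.sum_powerset_apply_card (fun k => (((k + 1 : ℕ) : ℝ))⁻¹)
  have hterm : ∀ k, (n.choose k : ℝ) * (((k + 1 : ℕ) : ℝ))⁻¹
      = ((n + 1).choose (k + 1) : ℝ) / (n + 1) := by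
    intro k
    have hc : (n + 1) * n.choose k = (n + 1).choose (k + 1) * (k + 1) :=
      Nat.add_one_mul_choose_eq n k
    have hc' : ((n : ℝ) + 1) * (n.choose k : ℝ) = ((n + 1).choose (k + 1) : ℝ) * ((k : ℝ) + 1) := by
      exact_mod_cast hc
    have hk1 : ((k : ℝ) + 1) ≠ 0 := by positivity
    have hn1 : ((n : ℝ) + 1) ≠ 0 := by positivity
    field_simp
    push_cast
    linarith [hc']
  have h3 : ∑ k ∈ Finset.range (n + 1), ((n + 1).choose (k + 1) : ℝ) = 2 ^ (n + 1) - 1 := by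
    have hnat : (∑ k ∈ Finset.range (n + 1), (n + 1).choose (k + 1)) + 1 = 2 ^ (n + 1) := by
      have h := Nat.sum_range_choose (n + 1)
      rw [Finset.sum_range_succ' _ (n + 1)] at h
      simpa using h
    have hcast : ((∑ k ∈ Finset.range (n + 1), (n + 1).choose (k + 1) : ℕ) : ℝ) + 1
        = 2 ^ (n + 1) := by exact_mod_cast hnat
    push_cast at hcast
    linarith
  rw [h1, h2]
  simp only [nsmul_eq_mul]
  rw [Finset.sum_congr rfl (fun k _ => hterm k), ← Finset.sum_div, h3, hGcard]
  push_cast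
  ring


lemma two_pow_card_sub_one_pos {G : Finset Θ} (hG : G.Nonempty) :
    (0 : ℝ) < (2 : ℝ) ^ G.card - 1 := by
  have h1 : 1 ≤ G.card := Finset.card_pos.mpr hG
  have : (2 : ℝ) ^ 1 ≤ (2 : ℝ) ^ G.card := by
    apply pow_le_pow_right₀ (by norm_num) h1
  simp at this; linarith

lemma card_le_two_pow_sub_one {G : Finset Θ} (hG : G.Nonempty) :
    (G.card : ℝ) ≤ (2 : ℝ) ^ G.card - 1 := by
  have h : G.card < 2 ^ G.card := Nat.lt_two_pow_self (n := G.card)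
  have : (G.card : ℝ) + 1 ≤ (2 : ℕ) ^ G.card := by exact_mod_cast h
  push_cast at this
  linarith

lemma mF_nonneg {m : Finset Θ → ℝ} (hm : IsBPA m) (F : Finset Θ) : 0 ≤ mF m F := by
  rw [mF_eq]
  refine Finset.sum_nonneg fun G hG => ?_
  simp only [mem_filter, mem_univ, true_and] at hG
  rcases G.eq_empty_or_nonempty with rfl | hGne
  · simp [hm.1]
  · exact div_nonneg (hm.2.1 G) (le_of_lt (two_pow_card_sub_one_pos hGne))

lemma mF_le_BetP {m : Finset Θ → ℝ} (hm : IsBPA m) {F : Finset Θ} {θ : Θ} (hθ : θ ∈ F) :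
    mF m F ≤ BetP m θ := by
  rw [mF_eq, BetP]
  calc ∑ G ∈ Finset.univ.filter (fun G : Finset Θ => F ⊆ G), m G / ((2 : ℝ) ^ G.card - 1)
      ≤ ∑ G ∈ Finset.univ.filter (fun G : Finset Θ => F ⊆ G), m G / (G.card : ℝ) := by
        refine Finset.sum_le_sum fun G hG => ?_
        simp only [mem_filter, mem_univ, true_and] at hG
        have hGne : G.Nonempty := ⟨θ, hG hθ⟩
        have hc : (0 : ℝ) < G.card := by exact_mod_cast Finset.card_pos.mpr hGne
        exact div_le_div_of_nonneg_left (hm.2.1 G) hc (card_le_two_pow_sub_one hGne)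
    _ ≤ ∑ G ∈ Finset.univ.filter (fun G : Finset Θ => θ ∈ G), m G / (G.card : ℝ) := by
        refine Finset.sum_le_sum_of_subset_of_nonneg ?_ fun G _ _ => ?_
        · intro G hG
          simp only [mem_filter, mem_univ, true_and] at *
          exact hG hθ
        · exact div_nonneg (hm.2.1 G) (Nat.cast_nonneg _)

lemma BetP_eq_sum_mF (m : Finset Θ → ℝ) (θ : Θ) :
    BetP m θ = ∑ F ∈ Finset.univ.filter (fun F : Finset Θ => θ ∈ F), mF m F / (F.card : ℝ) := by
  symm
  calc ∑ F ∈ Finset.univ.filter (fun F : Finset Θ => θ ∈ F), mF m F / (F.card : ℝ)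
      = ∑ F : Finset Θ, ∑ G : Finset Θ,
          (if θ ∈ F ∧ F ⊆ G then m G / ((2:ℝ) ^ G.card - 1) / (F.card : ℝ) else 0) := by
        rw [Finset.sum_filter]
        refine Finset.sum_congr rfl fun F _ => ?_
        by_cases h1 : θ ∈ F
        · simp only [h1, if_true, true_and, mF_eq, Finset.sum_div, Finset.sum_filter]
          refine Finset.sum_congr rfl fun x _ => ?_
          by_cases h2 : F ⊆ x <;> simp [h2]
        · simp [h1]
    _ = ∑ G : Finset Θ, ∑ F ∈ Finset.univ.filter (fun F : Finset Θ => θ ∈ F ∧ F ⊆ G),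
          m G / ((2:ℝ) ^ G.card - 1) / (F.card : ℝ) := by
        rw [Finset.sum_comm]
        exact Finset.sum_congr rfl fun G _ => (Finset.sum_filter _ _).symm
    _ = ∑ G : Finset Θ, (if θ ∈ G then m G / (G.card : ℝ) else 0) := by
        refine Finset.sum_congr rfl fun G _ => ?_
        by_cases hθG : θ ∈ G
        · rw [if_pos hθG]
          have hGne : G.Nonempty := ⟨θ, hθG⟩
          have hstep : ∑ F ∈ Finset.univ.filter (fun F : Finset Θ => θ ∈ F ∧ F ⊆ G),
              m G / ((2:ℝ) ^ G.card - 1) / (F.card : ℝ)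
              = (m G / ((2:ℝ) ^ G.card - 1)) *
                ∑ F ∈ Finset.univ.filter (fun F : Finset Θ => θ ∈ F ∧ F ⊆ G), ((F.card : ℝ))⁻¹ := by
            rw [Finset.mul_sum]
            exact Finset.sum_congr rfl fun F _ => div_eq_mul_inv _ _
          rw [hstep, sum_inv_card_subsets G hθG]
          have h2 : ((2:ℝ) ^ G.card - 1) ≠ 0 := ne_of_gt (two_pow_card_sub_one_pos hGne)
          field_simp
        · rw [if_neg hθG]
          have hempty : Finset.univ.filter (fun F : Finset Θ => θ ∈ F ∧ F ⊆ G) = ∅ := by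
            ext F
            simp only [mem_filter, mem_univ, true_and, Finset.notMem_empty, iff_false, not_and]
            intro h1 h2
            exact absurd (h2 h1) hθG
          simp [hempty]
    _ = BetP m θ := by rw [BetP, Finset.sum_filter]

end Helpers

theorem EFB_ge_pignistic_entropy {Θ : Type*} [Fintype Θ] [DecidableEq Θ] [Nonempty Θ]
    (m : Finset Θ → ℝ) (hm : IsBPA m) :
    ∑ θ : Θ, Real.negMulLog (BetP m θ) ≤ EFB m := by
  calc ∑ θ : Θ, Real.negMulLog (BetP m θ)
      = ∑ θ : Θ, ∑ F ∈ Finset.univ.filter (fun F : Finset Θ => θ ∈ F),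
          (mF m F / (F.card : ℝ)) * (-Real.log (BetP m θ)) := by
        refine Finset.sum_congr rfl fun θ _ => ?_
        have h : Real.negMulLog (BetP m θ)
            = (∑ F ∈ Finset.univ.filter (fun F : Finset Θ => θ ∈ F), mF m F / (F.card : ℝ))
              * (-Real.log (BetP m θ)) := by
          rw [← BetP_eq_sum_mF, Real.negMulLog]; ring
        rw [h, Finset.sum_mul]
    _ = ∑ F : Finset Θ, ∑ θ ∈ F, (mF m F / (F.card : ℝ)) * (-Real.log (BetP m θ)) := by
        simp_rw [Finset.sum_filter]
        rw [Finset.sum_comm]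
        refine Finset.sum_congr rfl fun F _ => ?_
        rw [Finset.sum_ite_mem, Finset.univ_inter]
    _ ≤ ∑ F : Finset Θ, ∑ θ ∈ F, (mF m F / (F.card : ℝ)) * (-Real.log (mF m F)) := by
        refine Finset.sum_le_sum fun F _ => Finset.sum_le_sum fun θ hθ => ?_
        have hq := mF_nonneg hm F
        rcases eq_or_lt_of_le hq with h0 | h0
        · rw [← h0]; simp
        · have hle : mF m F ≤ BetP m θ := mF_le_BetP hm hθ
          have hlog : Real.log (mF m F) ≤ Real.log (BetP m θ) := Real.log_le_log h0 hle
          have hcoef : (0:ℝ) ≤ mF m F / (F.card : ℝ) := div_nonneg hq (Nat.cast_nonneg _)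
          exact mul_le_mul_of_nonneg_left (neg_le_neg hlog) hcoef
    _ = EFB m := by
        rw [EFB, Finset.sum_filter]
        refine Finset.sum_congr rfl fun F _ => ?_
        rcases F.eq_empty_or_nonempty with rfl | hF
        · simp
        · rw [if_pos hF, Finset.sum_const, nsmul_eq_mul, Real.negMulLog]
          have hc : (F.card : ℝ) ≠ 0 := by
            exact_mod_cast (Finset.card_pos.mpr hF).ne'
          field_simp
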